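/- Let D be an UDAF digraph and define the refinement relation on finite multisets over the vertices of the core D°: M₂ is an elementary refinement of M₁ if it is obtained by removing one copy of a vertex v (present in M₁) and adding the multiset of endpoints of a finite prefix-free exhaustive family P of walks from v (every infinite forwards walk from v in D° begins with exactly one element of P). Then the equivalence relation 'having a common refinement' is an equivalence relation; in particular it is transitive. -/

import Mathlib

structure Digraph' where
  V : Type
  E : Type
  s : E → V
  t : E → V

structure DHom (D₁ D₂ : Digraph') where
  vMap : D₁.V → D₂.V
  eMap : D₁.E → D₂.E
  hs : ∀ e, D₂.s (eMap e) = vMap (D₁.s e)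
  ht : ∀ e, D₂.t (eMap e) = vMap (D₁.t e)

def BiWalk (D : Digraph') : Type :=
  { f : ℤ → D.E // ∀ i : ℤ, D.t (f i) = D.s (f (i + 1)) }

def biMap {D₁ D₂ : Digraph'} (φ : DHom D₁ D₂) (w : BiWalk D₁) : BiWalk D₂ :=
  ⟨fun i => φ.eMap (w.1 i), fun i => by rw [φ.ht, φ.hs, w.2 i]⟩

structure FwdWalk (D : Digraph') where
  ed : ℕ → D.E
  chain : ∀ i : ℕ, D.t (ed i) = D.s (ed (i + 1))

structure BwdWalk (D : Digraph') where
  ed : ℕ → D.E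
  chain : ∀ i : ℕ, D.t (ed (i + 1)) = D.s (ed i)

/-- UDAF digraph condition: for each vertex, the number of infinite forwards walks
from it and of infinite backwards walks to it are each `≠ 1`. -/
def IsUDAF (D : Digraph') : Prop :=
  (∀ v : D.V, ¬∃! p : FwdWalk D, D.s (p.ed 0) = v) ∧
  (∀ v : D.V, ¬∃! p : BwdWalk D, D.t (p.ed 0) = v)

/-- Edges lying on some bi-infinite walk. -/
def CoreE (D : Digraph') : Set D.E := {e | ∃ w : BiWalk D, ∃ i : ℤ, w.1 i = e}

/-- Vertices lying on some bi-infinite walk. -/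
def CoreV (D : Digraph') : Set D.V := {v | ∃ w : BiWalk D, ∃ i : ℤ, D.s (w.1 i) = v}

structure FinWalk (D : Digraph') where
  start : D.V
  ed : List D.E
  chain : List.Chain' (fun a b => D.t a = D.s b) ed
  hstart : ∀ e ∈ ed.head?, D.s e = start

def endVert (D : Digraph') (p : FinWalk D) : D.V :=
  p.ed.getLast?.elim p.start D.t

/-- The infinite forwards walk `q` begins with the finite walk `p`. -/
def Begins (D : Digraph') (q : FwdWalk D) (p : FinWalk D) : Prop :=
  D.s (q.ed 0) = p.start ∧ ∀ (i : ℕ) (h : i < p.ed.length), q.ed i = p.ed.get ⟨i, h⟩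

/-- `M₂` is obtained from `M₁` by replacing one copy of a core vertex `v` by the
endpoint multiset of a finite exhaustive prefix-free family of core walks from `v`. -/
def ElemRefine (D : Digraph') (M₁ M₂ : ↥(CoreV D) → ℕ) : Prop := by
  classical
  exact ∃ (v : ↥(CoreV D)) (P : Finset (FinWalk D)),
    0 < M₁ v ∧
    (∀ p ∈ P, p.start = v.1 ∧ ∀ e ∈ p.ed, e ∈ CoreE D) ∧
    (∀ q : FwdWalk D, D.s (q.ed 0) = v.1 → (∀ i, q.ed i ∈ CoreE D) →
      ∃! p, p ∈ P ∧ Begins D q p) ∧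
    ∀ w : ↥(CoreV D),
      M₂ w = (M₁ w - (if w = v then 1 else 0)) + (P.filter (fun p => endVert D p = w.1)).card

/-- Refinement: a finite composite of elementary refinements. -/
def Refine (D : Digraph') : (↥(CoreV D) → ℕ) → (↥(CoreV D) → ℕ) → Prop :=
  Relation.ReflTransGen (ElemRefine D)

open Classical

namespace S10
variable {D : Digraph'}

lemma FinWalk.ext' {p q : FinWalk D} (h1 : p.start = q.start) (h2 : p.ed = q.ed) : p = q := by
  cases p; cases q; simp_all

def emptyW (D : Digraph') (v : D.V) : FinWalk D := ⟨v, [], List.isChain_nil, by simp⟩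

@[simp] lemma endVert_emptyW (v : D.V) : endVert D (emptyW D v) = v := rfl

lemma endVert_nil {p : FinWalk D} (h : p.ed = []) : endVert D p = p.start := by
  simp [endVert, h]

lemma endVert_ne {p : FinWalk D} (h : p.ed ≠ []) :
    endVert D p = D.t (p.ed.getLast h) := by
  simp [endVert, List.getLast?_eq_getLast h]

lemma sMem_core {e : D.E} (he : e ∈ CoreE D) : D.s e ∈ CoreV D := by
  obtain ⟨w, i, rfl⟩ := he; exact ⟨w, i, rfl⟩

lemma tMem_core {e : D.E} (he : e ∈ CoreE D) : D.t e ∈ CoreV D := by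
  obtain ⟨w, i, rfl⟩ := he; exact ⟨w, i + 1, (w.2 i).symm⟩

lemma endVert_core {p : FinWalk D} (hs : p.start ∈ CoreV D)
    (hc : ∀ e ∈ p.ed, e ∈ CoreE D) : endVert D p ∈ CoreV D := by
  rcases eq_or_ne p.ed [] with h | h
  · rw [endVert_nil h]; exact hs
  · rw [endVert_ne h]; exact tMem_core (hc _ (p.ed.getLast_mem h))

/-- From any core vertex there is an infinite forwards walk all of whose edges are core. -/
lemma exists_fwd_core {v : D.V} (hv : v ∈ CoreV D) :
    ∃ q : FwdWalk D, D.s (q.ed 0) = v ∧ ∀ i, q.ed i ∈ CoreE D := by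
  obtain ⟨w, i, hi⟩ := hv
  refine ⟨⟨fun n => w.1 (i + n), fun n => ?_⟩, by simpa using hi, fun n => ⟨w, i + n, rfl⟩⟩
  have h := w.2 (i + n)
  have e : i + (n:ℤ) + 1 = i + ((n+1 : ℕ) : ℤ) := by push_cast; ring
  rw [e] at h; exact h

end S10
namespace S10
variable {D : Digraph'}

/-- Prepend an edge to a walk (junk value if the endpoints do not match). -/
noncomputable def consW (D : Digraph') (e : D.E) (p : FinWalk D) : FinWalk D :=
  if h : D.t e = p.start then
    ⟨D.s e, e :: p.ed, by
      refine List.isChain_cons.mpr ⟨fun b hb => ?_, p.chain⟩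
      rw [p.hstart b hb, h], by simp⟩
  else emptyW D (D.s e)

lemma consW_eq (e : D.E) (p : FinWalk D) (h : D.t e = p.start) :
    (consW D e p).start = D.s e ∧ (consW D e p).ed = e :: p.ed := by
  rw [consW, dif_pos h]; exact ⟨rfl, rfl⟩

lemma endVert_consW (e : D.E) (p : FinWalk D) (h : D.t e = p.start) :
    endVert D (consW D e p) = endVert D p := by
  obtain ⟨h1, h2⟩ := consW_eq e p h
  unfold endVert
  rw [h2, h1]
  cases hl : p.ed with
  | nil => simp [hl, h, endVert]
  | cons a l => rw [List.getLast?_cons_cons]; rfl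

end S10
namespace S10
variable {D : Digraph'}

/-- Concatenation of finite walks. -/
noncomputable def appendW (p r : FinWalk D) (h : r.start = endVert D p) : FinWalk D where
  start := p.start
  ed := p.ed ++ r.ed
  chain := by
    refine List.isChain_append.mpr ⟨p.chain, r.chain, ?_⟩
    intro a ha b hb
    have h1 : endVert D p = D.t a := by
      unfold endVert; rw [Option.mem_def.mp ha]; rfl
    rw [r.hstart b hb, h, h1]
  hstart := by
    intro e he
    cases hp : p.ed with
    | nil =>
      rw [hp, List.nil_append] at he
      rw [r.hstart e he, h, endVert_nil hp]
    | cons a l =>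
      rw [hp, List.cons_append] at he
      simp only [List.head?_cons, Option.mem_def, Option.some.injEq] at he
      rw [← he]
      exact p.hstart a (by rw [hp]; rfl)

@[simp] lemma appendW_start (p r : FinWalk D) (h) : (appendW p r h).start = p.start := rfl
@[simp] lemma appendW_ed (p r : FinWalk D) (h) : (appendW p r h).ed = p.ed ++ r.ed := rfl

lemma endVert_appendW (p r : FinWalk D) (h) : endVert D (appendW p r h) = endVert D r := by
  rcases eq_or_ne r.ed [] with hr | hr
  · rw [endVert_nil hr, h]
    unfold endVert
    rw [appendW_ed, hr, List.append_nil]; rfl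
  · unfold endVert
    rw [appendW_ed, List.getLast?_append_of_ne_nil _ hr]
    rcases List.exists_mem_of_ne_nil _ hr with ⟨x, -⟩
    cases hx : r.ed.getLast? with
    | none => rw [List.getLast?_eq_none_iff] at hx; exact absurd hx hr
    | some y => rfl

def startAt (p : FinWalk D) (k : ℕ) : D.V := (p.ed.take k).getLast?.elim p.start D.t

@[simp] lemma startAt_zero (p : FinWalk D) : startAt p 0 = p.start := rfl

lemma startAt_of_le (p : FinWalk D) {k : ℕ} (h : p.ed.length ≤ k) :
    startAt p k = endVert D p := by
  unfold startAt endVert; rw [List.take_of_length_le h]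

/-- Remove the first `k` edges of a finite walk. -/
noncomputable def dropW (p : FinWalk D) (k : ℕ) : FinWalk D where
  start := startAt p k
  ed := p.ed.drop k
  chain := p.chain.drop k
  hstart := by
    intro e he
    have hch : List.Chain' (fun a b => D.t a = D.s b) (p.ed.take k ++ p.ed.drop k) := by
      rw [List.take_append_drop]; exact p.chain
    cases htk : p.ed.take k with
    | nil =>
      have hdrop : p.ed.drop k = p.ed := by
        conv_rhs => rw [← List.take_append_drop k p.ed]
        rw [htk, List.nil_append]
      rw [hdrop] at he
      rw [p.hstart e he]
      unfold startAt; rw [htk]; rfl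
    | cons a l =>
      have hlink := (List.isChain_append.mp hch).2.2
      have hlast : (p.ed.take k).getLast? = some ((a :: l).getLast (by simp)) := by
        rw [htk]; exact List.getLast?_eq_getLast _
      have := hlink _ (Option.mem_def.mpr hlast) e he
      rw [← this]
      unfold startAt; rw [hlast]; rfl

@[simp] lemma dropW_start (p : FinWalk D) (k) : (dropW p k).start = startAt p k := rfl
@[simp] lemma dropW_ed (p : FinWalk D) (k) : (dropW p k).ed = p.ed.drop k := rfl

lemma endVert_dropW (p : FinWalk D) (k : ℕ) : endVert D (dropW p k) = endVert D p := by
  rcases eq_or_ne (p.ed.drop k) [] with hd | hd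
  · have hk : p.ed.length ≤ k := by
      have := List.drop_eq_nil_iff.mp hd; omega
    rw [endVert_nil (p := dropW p k) hd, dropW_start, startAt_of_le p hk]
  · unfold endVert
    rw [dropW_ed]
    have : p.ed.getLast? = (p.ed.drop k).getLast? := by
      conv_lhs => rw [← List.take_append_drop k p.ed]
      exact List.getLast?_append_of_ne_nil _ hd
    rw [← this]
    cases hx : p.ed.getLast? with
    | none =>
      rw [List.getLast?_eq_none_iff] at hx
      rw [hx] at hd; simp at hd
    | some y => rfl

/-- Splitting: a walk whose edge list extends that of `p` is `p` followed by a rest. -/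
lemma eq_appendW_dropW {p q : FinWalk D} (hs : p.start = q.start) (hpre : p.ed <+: q.ed) :
    ∃ h, q = appendW p (dropW q p.ed.length) h := by
  have htake : q.ed.take p.ed.length = p.ed := (List.prefix_iff_eq_take.mp hpre).symm
  have h : (dropW q p.ed.length).start = endVert D p := by
    rw [dropW_start]
    unfold startAt endVert
    rw [htake, hs]
  refine ⟨h, FinWalk.ext' ?_ ?_⟩
  · rw [appendW_start, hs]
  · rw [appendW_ed, dropW_ed]
    calc q.ed = q.ed.take p.ed.length ++ q.ed.drop p.ed.length :=
          (List.take_append_drop _ _).symm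
      _ = p.ed ++ q.ed.drop p.ed.length := by rw [htake]

end S10
namespace S10
variable {D : Digraph'}

lemma s_get_zero (p : FinWalk D) (h : 0 < p.ed.length) :
    D.s (p.ed.get ⟨0, h⟩) = p.start := by
  rcases p with ⟨st, ed, c, hs⟩
  cases ed with
  | nil => simp at h
  | cons a l => simpa using hs a rfl

/-- First `n` edges of an infinite walk, as a finite walk. -/
def truncW (q : FwdWalk D) (n : ℕ) : FinWalk D where
  start := D.s (q.ed 0)
  ed := (List.range n).map q.ed
  chain := by
    refine List.isChain_iff_getElem.mpr ?_
    intro i h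
    simp only [List.length_map, List.length_range] at h
    simp only [List.get_eq_getElem, List.getElem_map, List.getElem_range]
    exact q.chain i
  hstart := by
    intro e he
    cases n with
    | zero => simp at he
    | succ m =>
      rw [List.range_succ_eq_map, List.map_cons] at he
      simp only [List.head?_cons, Option.mem_def, Option.some.injEq] at he
      rw [← he]

@[simp] lemma truncW_start (q : FwdWalk D) (n) : (truncW q n).start = D.s (q.ed 0) := rfl
@[simp] lemma truncW_ed (q : FwdWalk D) (n) : (truncW q n).ed = (List.range n).map q.ed := rfl
@[simp] lemma truncW_length (q : FwdWalk D) (n) : (truncW q n).ed.length = n := by simp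

lemma begins_truncW (q : FwdWalk D) (n : ℕ) : Begins D q (truncW q n) := by
  refine ⟨rfl, fun i h => ?_⟩
  simp only [truncW_ed, List.get_eq_getElem, List.getElem_map, List.getElem_range]

lemma endVert_truncW (q : FwdWalk D) (n : ℕ) :
    endVert D (truncW q n) = D.s (q.ed n) := by
  cases n with
  | zero => rw [endVert_nil (by simp)]; rfl
  | succ m =>
    have hsp : (truncW q (m+1)).ed = (List.range m).map q.ed ++ [q.ed m] := by
      rw [truncW_ed, List.range_succ, List.map_append]; rfl
    unfold endVert
    rw [hsp, List.getLast?_concat]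
    exact q.chain m

lemma mem_truncW_core (q : FwdWalk D) (hc : ∀ i, q.ed i ∈ CoreE D) (n : ℕ) :
    ∀ e ∈ (truncW q n).ed, e ∈ CoreE D := by
  intro e he
  rw [truncW_ed, List.mem_map] at he
  obtain ⟨i, -, rfl⟩ := he
  exact hc i

noncomputable def catEd (p : FinWalk D) (q : FwdWalk D) (i : ℕ) : D.E :=
  if hi : i < p.ed.length then p.ed.get ⟨i, hi⟩ else q.ed (i - p.ed.length)

/-- A finite walk followed by an infinite walk. -/
noncomputable def catInf (p : FinWalk D) (q : FwdWalk D)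
    (h : D.s (q.ed 0) = endVert D p) : FwdWalk D where
  ed := catEd p q
  chain := by
    intro i
    unfold catEd
    rcases lt_or_ge (i+1) p.ed.length with h1 | h1
    · rw [dif_pos h1, dif_pos (by omega : i < p.ed.length)]
      exact List.isChain_iff_getElem.mp p.chain i (by omega)
    · rw [dif_neg (by omega : ¬ i + 1 < p.ed.length)]
      rcases lt_or_ge i p.ed.length with h2 | h2
      · -- i+1 = length, i < length
        have hlen : i + 1 = p.ed.length := by omega
        rw [dif_pos h2]
        have hne : p.ed ≠ [] := by
          intro hh; rw [hh] at h2; simp at h2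
        have : p.ed.get ⟨i, h2⟩ = p.ed.getLast hne := by
          rw [List.getLast_eq_getElem]
          simp only [List.get_eq_getElem]
          congr 1; omega
        have h0 : i + 1 - p.ed.length = 0 := by omega
        rw [this, ← endVert_ne hne, ← h, h0]
      · rw [dif_neg (by omega : ¬ i < p.ed.length)]
        have : i + 1 - p.ed.length = (i - p.ed.length) + 1 := by omega
        rw [this]
        exact q.chain _

lemma catInf_ed_lt (p : FinWalk D) (q : FwdWalk D) (h) {i : ℕ} (hi : i < p.ed.length) :
    (catInf p q h).ed i = p.ed.get ⟨i, hi⟩ := by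
  show catEd p q i = _
  unfold catEd; rw [dif_pos hi]

lemma catInf_ed_ge (p : FinWalk D) (q : FwdWalk D) (h) {i : ℕ} (hi : p.ed.length ≤ i) :
    (catInf p q h).ed i = q.ed (i - p.ed.length) := by
  show catEd p q i = _
  unfold catEd; rw [dif_neg (by omega)]

lemma catInf_start (p : FinWalk D) (q : FwdWalk D) (h) :
    D.s ((catInf p q h).ed 0) = p.start := by
  rcases Nat.eq_zero_or_pos p.ed.length with h0 | h0
  · rw [catInf_ed_ge p q h (by omega), Nat.zero_sub, h,
      endVert_nil (List.length_eq_zero_iff.mp h0)]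
  · rw [catInf_ed_lt p q h h0]
    exact s_get_zero p h0

lemma begins_catInf (p : FinWalk D) (q : FwdWalk D) (h) : Begins D (catInf p q h) p :=
  ⟨catInf_start p q h, fun i hi => catInf_ed_lt p q h hi⟩

lemma catInf_core (p : FinWalk D) (q : FwdWalk D) (h)
    (hp : ∀ e ∈ p.ed, e ∈ CoreE D) (hq : ∀ i, q.ed i ∈ CoreE D) :
    ∀ i, (catInf p q h).ed i ∈ CoreE D := by
  intro i
  rcases lt_or_ge i p.ed.length with hi | hi
  · rw [catInf_ed_lt p q h hi]; exact hp _ (p.ed.get_mem _)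
  · rw [catInf_ed_ge p q h hi]; exact hq _

lemma begins_of_prefix {z : FwdWalk D} {p₁ p₂ : FinWalk D}
    (hss : p₁.start = p₂.start) (hpre : p₁.ed <+: p₂.ed) (hb : Begins D z p₂) :
    Begins D z p₁ := by
  refine ⟨by rw [hb.1, hss], fun i h => ?_⟩
  rw [hb.2 i (lt_of_lt_of_le h hpre.length_le)]
  simp only [List.get_eq_getElem]
  exact (hpre.getElem h).symm

lemma prefix_of_begins {z : FwdWalk D} {p₁ p₂ : FinWalk D}
    (h₁ : Begins D z p₁) (h₂ : Begins D z p₂) (hlen : p₁.ed.length ≤ p₂.ed.length) :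
    p₁.ed <+: p₂.ed := by
  rw [List.prefix_iff_eq_take]
  refine List.ext_get (by simp [Nat.min_eq_left hlen]) ?_
  intro i hi1 hi2
  rw [← h₁.2 i hi1]
  have hi2' : i < p₂.ed.length := by
    simp [Nat.lt_min] at hi2; omega
  rw [List.get_eq_getElem, List.getElem_take]; exact h₂.2 i hi2'

end S10
namespace S10
variable {D : Digraph'}

/-- A prefix-free exhaustive family of core walks at a core vertex. -/
def FamAt (v : ↥(CoreV D)) (P : Finset (FinWalk D)) : Prop :=
  (∀ p ∈ P, p.start = v.1 ∧ ∀ e ∈ p.ed, e ∈ CoreE D) ∧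
  (∀ q : FwdWalk D, D.s (q.ed 0) = v.1 → (∀ i, q.ed i ∈ CoreE D) →
      ∃! p, p ∈ P ∧ Begins D q p)

lemma FamAt.eq_of_prefix {v : ↥(CoreV D)} {P : Finset (FinWalk D)} (hF : FamAt v P)
    {p₁ p₂ : FinWalk D} (h1 : p₁ ∈ P) (h2 : p₂ ∈ P) (hpre : p₁.ed <+: p₂.ed) :
    p₁ = p₂ := by
  have hst1 := (hF.1 p₁ h1).1
  have hst2 := (hF.1 p₂ h2).1
  have hcore : endVert D p₂ ∈ CoreV D :=
    endVert_core (by rw [hst2]; exact v.2) (hF.1 p₂ h2).2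
  obtain ⟨r, hr0, hrc⟩ := exists_fwd_core hcore
  obtain ⟨p₀, -, huniq⟩ := hF.2 (catInf p₂ r hr0)
    (by rw [catInf_start]; exact hst2) (catInf_core _ _ _ (hF.1 p₂ h2).2 hrc)
  have e2 := huniq p₂ ⟨h2, begins_catInf _ _ _⟩
  have e1 := huniq p₁ ⟨h1,
    begins_of_prefix (hst1.trans hst2.symm) hpre (begins_catInf _ _ _)⟩
  rw [e1, e2]

lemma FamAt.unique_prefix {v : ↥(CoreV D)} {P : Finset (FinWalk D)} (hF : FamAt v P)
    {q : FinWalk D} (hqs : q.start = v.1) (hqc : ∀ e ∈ q.ed, e ∈ CoreE D)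
    (hn : ∀ p ∈ P, p.ed.length ≤ q.ed.length) :
    ∃! p, p ∈ P ∧ p.ed <+: q.ed := by
  have hcore : endVert D q ∈ CoreV D := endVert_core (by rw [hqs]; exact v.2) hqc
  obtain ⟨r, hr0, hrc⟩ := exists_fwd_core hcore
  obtain ⟨p₀, ⟨hp₀P, hp₀b⟩, huniq⟩ := hF.2 (catInf q r hr0)
    (by rw [catInf_start, hqs]) (catInf_core _ _ _ hqc hrc)
  refine ⟨p₀, ⟨hp₀P, ?_⟩, ?_⟩
  · exact prefix_of_begins hp₀b (begins_catInf _ _ _) (hn _ hp₀P)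
  · rintro p ⟨hpP, hppre⟩
    refine huniq p ⟨hpP, begins_of_prefix ?_ hppre (begins_catInf _ _ _)⟩
    rw [(hF.1 p hpP).1, hqs]

open Classical in
/-- All core walks of length `n` starting at `v`. -/
noncomputable def Wset (D : Digraph') [Fintype D.E] : ℕ → D.V → Finset (FinWalk D)
  | 0, v => {emptyW D v}
  | n+1, v => (Finset.univ.filter (fun e : D.E => D.s e = v ∧ e ∈ CoreE D)).biUnion
      (fun e => (Wset D n (D.t e)).image (consW D e))

variable [Fintype D.E]

lemma mem_Wset {n : ℕ} {v : D.V} {p : FinWalk D} :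
    p ∈ Wset D n v ↔ p.start = v ∧ p.ed.length = n ∧ ∀ e ∈ p.ed, e ∈ CoreE D := by
  classical
  induction n generalizing v p with
  | zero =>
    simp only [Wset, Finset.mem_singleton]
    constructor
    · rintro rfl; exact ⟨rfl, rfl, by simp [emptyW]⟩
    · rintro ⟨h1, h2, -⟩
      exact FinWalk.ext' h1 (List.length_eq_zero_iff.mp h2)
  | succ m ih =>
    simp only [Wset, Finset.mem_biUnion, Finset.mem_filter, Finset.mem_univ, true_and,
      Finset.mem_image]
    constructor
    · rintro ⟨e, ⟨hes, hec⟩, p', hp', rfl⟩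
      obtain ⟨hs', hl', hc'⟩ := ih.mp hp'
      obtain ⟨h1, h2⟩ := consW_eq e p' hs'.symm
      refine ⟨by rw [h1, hes], by rw [h2]; simp [hl'], ?_⟩
      intro f hf
      rw [h2, List.mem_cons] at hf
      rcases hf with rfl | hf
      · exact hec
      · exact hc' f hf
    · rintro ⟨h1, h2, h3⟩
      cases hp : p.ed with
      | nil => rw [hp] at h2; simp at h2
      | cons a l =>
        have hca : a ∈ CoreE D := h3 a (by rw [hp]; exact List.mem_cons_self)
        have hsa : D.s a = v := by rw [← h1]; exact p.hstart a (by rw [hp]; rfl)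
        have hstart1 : startAt p 1 = D.t a := by
          simp [startAt, hp]
        refine ⟨a, ⟨hsa, hca⟩, dropW p 1, ?_, ?_⟩
        · have hl : l.length = m := by rw [hp] at h2; simpa using h2
          refine ih.mpr ⟨by rw [dropW_start, hstart1], ?_, ?_⟩
          · rw [dropW_ed, hp]; simpa using hl
          · intro f hf
            rw [dropW_ed] at hf
            exact h3 f (List.mem_of_mem_drop hf)
        · have hts : D.t a = (dropW p 1).start := by rw [dropW_start, hstart1]
          obtain ⟨g1, g2⟩ := consW_eq a (dropW p 1) hts
          refine FinWalk.ext' (by rw [g1, hsa, h1]) ?_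
          rw [g2, dropW_ed, hp]
          simp
end S10
namespace S10
open Classical
variable {D : Digraph'} [Fintype D.E]

omit [Fintype D.E] in
noncomputable instance coreVFintype [Fintype D.V] : Fintype ↥(CoreV D) :=
  (Set.toFinite _).fintype

lemma famAt_Wset (v : ↥(CoreV D)) (n : ℕ) : FamAt v (Wset D n v.1) := by
  constructor
  · intro p hp
    obtain ⟨h1, -, h3⟩ := mem_Wset.mp hp
    exact ⟨h1, h3⟩
  · intro q hq0 hqc
    refine ⟨truncW q n, ⟨mem_Wset.mpr ⟨by rw [truncW_start, hq0], by simp,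
      mem_truncW_core q hqc n⟩, begins_truncW q n⟩, ?_⟩
    rintro p ⟨hpW, hpb⟩
    obtain ⟨h1, h2, -⟩ := mem_Wset.mp hpW
    refine FinWalk.ext' (by rw [h1, truncW_start, hq0]) ?_
    refine List.ext_get (by simp [h2]) ?_
    intro i hi1 hi2
    rw [← hpb.2 i hi1]
    simp only [truncW_ed, List.get_eq_getElem, List.getElem_map, List.getElem_range]

noncomputable def cntW (D : Digraph') [Fintype D.E] (n : ℕ) (u w : D.V) : ℕ :=
  ((Wset D n u).filter (fun p => endVert D p = w)).card

lemma cntW_zero (u w : D.V) : cntW D 0 u w = if u = w then 1 else 0 := by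
  unfold cntW Wset
  rcases eq_or_ne u w with rfl | h
  · rw [if_pos rfl, Finset.filter_singleton, if_pos (endVert_emptyW u)]
    simp
  · rw [if_neg h, Finset.filter_singleton, if_neg (by rw [endVert_emptyW]; exact h)]
    simp

lemma consW_inj (e : D.E) {p p' : FinWalk D} (h : D.t e = p.start) (h' : D.t e = p'.start)
    (heq : consW D e p = consW D e p') : p = p' := by
  obtain ⟨a1, a2⟩ := consW_eq e p h
  obtain ⟨b1, b2⟩ := consW_eq e p' h'
  refine FinWalk.ext' (h ▸ h') ?_
  · have := a2.symm.trans (heq ▸ b2)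
    simpa using this

lemma cntW_succ (n : ℕ) (v w : D.V) :
    cntW D (n+1) v w =
      ∑ e ∈ Finset.univ.filter (fun e : D.E => D.s e = v ∧ e ∈ CoreE D),
        cntW D n (D.t e) w := by
  unfold cntW
  rw [show Wset D (n+1) v = (Finset.univ.filter
      (fun e : D.E => D.s e = v ∧ e ∈ CoreE D)).biUnion
      (fun e => (Wset D n (D.t e)).image (consW D e)) from rfl]
  rw [Finset.filter_biUnion, Finset.card_biUnion]
  · refine Finset.sum_congr rfl ?_
    intro e he
    have key : ((Wset D n (D.t e)).image (consW D e)).filter (fun p => endVert D p = w) =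
        ((Wset D n (D.t e)).filter (fun p => endVert D p = w)).image (consW D e) := by
      ext q
      simp only [Finset.mem_filter, Finset.mem_image]
      constructor
      · rintro ⟨⟨p, hp, rfl⟩, hend⟩
        refine ⟨p, ⟨hp, ?_⟩, rfl⟩
        rwa [endVert_consW e p (mem_Wset.mp hp).1.symm] at hend
      · rintro ⟨p, ⟨hp, hend⟩, rfl⟩
        exact ⟨⟨p, hp, rfl⟩, by rwa [endVert_consW e p (mem_Wset.mp hp).1.symm]⟩
    rw [key, Finset.card_image_of_injOn]
    intro p hp p' hp' heq
    exact consW_inj e (mem_Wset.mp (Finset.mem_filter.mp hp).1).1.symm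
      (mem_Wset.mp (Finset.mem_filter.mp hp').1).1.symm heq
  · intro e he f hf hef
    refine Finset.disjoint_left.mpr ?_
    rintro q hq1 hq2
    simp only [Finset.mem_filter, Finset.mem_image] at hq1 hq2
    obtain ⟨⟨p, hp, rfl⟩, -⟩ := hq1
    obtain ⟨⟨p', hp', heq⟩, -⟩ := hq2
    obtain ⟨-, a2⟩ := consW_eq e p (mem_Wset.mp hp).1.symm
    obtain ⟨-, b2⟩ := consW_eq f p' (mem_Wset.mp hp').1.symm
    have h2 := b2.symm.trans (heq ▸ a2)
    simp only [List.cons.injEq] at h2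
    exact hef h2.1.symm
end S10
namespace S10
open Classical
variable {D : Digraph'} [Fintype D.E] [Fintype D.V]

lemma cntW_zero' (v u : ↥(CoreV D)) :
    cntW D 0 v.1 u.1 = if v = u then 1 else 0 := by
  rw [cntW_zero]
  congr 1
  simp [Subtype.ext_iff]

lemma cnt_comp (m k : ℕ) (v : ↥(CoreV D)) (w : D.V) :
    cntW D (m + k) v.1 w = ∑ u : ↥(CoreV D), cntW D m v.1 u.1 * cntW D k u.1 w := by
  induction m generalizing v with
  | zero =>
    rw [Nat.zero_add, Finset.sum_congr rfl (fun u _ => by rw [cntW_zero' v u])]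
    simp [ite_mul]
  | succ m ih =>
    have h1 : m + 1 + k = (m + k) + 1 := by omega
    rw [h1, cntW_succ]
    have step : ∀ e ∈ Finset.univ.filter (fun e : D.E => D.s e = v.1 ∧ e ∈ CoreE D),
        cntW D (m+k) (D.t e) w = ∑ u : ↥(CoreV D), cntW D m (D.t e) u.1 * cntW D k u.1 w := by
      intro e he
      have hc : D.t e ∈ CoreV D := tMem_core (Finset.mem_filter.mp he).2.2
      exact ih ⟨D.t e, hc⟩
    rw [Finset.sum_congr rfl step, Finset.sum_comm]
    refine Finset.sum_congr rfl fun u _ => ?_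
    rw [cntW_succ, Finset.sum_mul]

end S10
namespace S10
open Classical
variable {D : Digraph'} [Fintype D.E]

lemma cnt_split (v : ↥(CoreV D)) {P : Finset (FinWalk D)} (hF : FamAt v P)
    {n : ℕ} (hn : ∀ p ∈ P, p.ed.length ≤ n) (w : D.V) :
    cntW D n v.1 w = ∑ p ∈ P, cntW D (n - p.ed.length) (endVert D p) w := by
  classical
  unfold cntW
  have hpart : (Wset D n v.1).filter (fun q => endVert D q = w) =
      P.biUnion (fun p => (Wset D n v.1).filter
        (fun q => endVert D q = w ∧ p.ed <+: q.ed)) := by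
    ext q
    simp only [Finset.mem_filter, Finset.mem_biUnion]
    constructor
    · rintro ⟨hqW, hqe⟩
      obtain ⟨hs, hl, hc⟩ := mem_Wset.mp hqW
      obtain ⟨p, ⟨hpP, hppre⟩, -⟩ := hF.unique_prefix hs hc
        (fun p hp => by rw [hl]; exact hn p hp)
      exact ⟨p, hpP, hqW, hqe, hppre⟩
    · rintro ⟨p, hp, hqW, hqe, -⟩
      exact ⟨hqW, hqe⟩
  rw [hpart, Finset.card_biUnion]
  · refine Finset.sum_congr rfl fun p hp => ?_
    have hps : p.start = v.1 := (hF.1 p hp).1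
    have hpc := (hF.1 p hp).2
    have hpn : p.ed.length ≤ n := hn p hp
    refine Finset.card_bij' (fun q _ => dropW q p.ed.length)
      (fun r hr => appendW p r (by
        obtain ⟨h1, -, -⟩ := mem_Wset.mp (Finset.mem_filter.mp hr).1
        exact h1)) ?_ ?_ ?_ ?_
    · intro q hq
      simp only [Finset.mem_filter] at hq ⊢
      obtain ⟨hqW, hqe, hqpre⟩ := hq
      obtain ⟨hqs, hql, hqc⟩ := mem_Wset.mp hqW
      have htake : q.ed.take p.ed.length = p.ed := (List.prefix_iff_eq_take.mp hqpre).symm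
      refine ⟨mem_Wset.mpr ⟨?_, ?_, ?_⟩, ?_⟩
      · rw [dropW_start]
        unfold startAt endVert
        rw [htake, hqs, hps]
      · rw [dropW_ed, List.length_drop, hql]
      · intro f hf
        rw [dropW_ed] at hf
        exact hqc f (List.mem_of_mem_drop hf)
      · rw [endVert_dropW, hqe]
    · intro r hr
      simp only [Finset.mem_filter] at hr ⊢
      obtain ⟨hrW, hre⟩ := hr
      obtain ⟨hrs, hrl, hrc⟩ := mem_Wset.mp hrW
      refine ⟨mem_Wset.mpr ⟨?_, ?_, ?_⟩, ?_, ?_⟩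
      · rw [appendW_start, hps]
      · rw [appendW_ed, List.length_append, hrl]; omega
      · intro f hf
        rw [appendW_ed, List.mem_append] at hf
        rcases hf with hf | hf
        · exact hpc f hf
        · exact hrc f hf
      · rw [endVert_appendW, hre]
      · rw [appendW_ed]; exact List.prefix_append _ _
    · intro q hq
      simp only [Finset.mem_filter] at hq
      obtain ⟨hqW, -, hqpre⟩ := hq
      obtain ⟨hqs, -, -⟩ := mem_Wset.mp hqW
      refine FinWalk.ext' ?_ ?_
      · rw [appendW_start, hps, hqs]
      · have htake : q.ed.take p.ed.length = p.ed := (List.prefix_iff_eq_take.mp hqpre).symm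
        rw [appendW_ed, dropW_ed]
        conv_rhs => rw [← List.take_append_drop p.ed.length q.ed]
        rw [htake]
    · intro r hr
      simp only [Finset.mem_filter] at hr
      obtain ⟨hrW, -⟩ := hr
      obtain ⟨hrs, -, -⟩ := mem_Wset.mp hrW
      refine FinWalk.ext' ?_ ?_
      · rw [dropW_start]
        unfold startAt
        rw [appendW_ed, List.take_left, appendW_start, hrs]
        unfold endVert; rfl
      · rw [dropW_ed, appendW_ed, List.drop_left]
  · intro p hp p' hp' hne
    refine Finset.disjoint_left.mpr ?_
    rintro q hq hq'
    simp only [Finset.mem_filter] at hq hq'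
    obtain ⟨-, -, hpre⟩ := hq
    obtain ⟨-, -, hpre'⟩ := hq'
    rcases List.prefix_or_prefix_of_prefix hpre hpre' with h | h
    · exact hne (hF.eq_of_prefix hp hp' h)
    · exact hne (hF.eq_of_prefix hp' hp h).symm

end S10
namespace S10
open Classical
variable {D : Digraph'}

lemma elemRefine_iff (M₁ M₂ : ↥(CoreV D) → ℕ) :
    ElemRefine D M₁ M₂ ↔ ∃ (v : ↥(CoreV D)) (P : Finset (FinWalk D)),
    0 < M₁ v ∧
    (∀ p ∈ P, p.start = v.1 ∧ ∀ e ∈ p.ed, e ∈ CoreE D) ∧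
    (∀ q : FwdWalk D, D.s (q.ed 0) = v.1 → (∀ i, q.ed i ∈ CoreE D) →
      ∃! p, p ∈ P ∧ Begins D q p) ∧
    ∀ w : ↥(CoreV D),
      M₂ w = (M₁ w - (if w = v then 1 else 0)) + (P.filter (fun p => endVert D p = w.1)).card :=
  Iff.rfl

lemma refine_congr {M N N' : ↥(CoreV D) → ℕ} (h : Refine D M N) (h' : ∀ w, N w = N' w) :
    Refine D M N' := by
  have : N = N' := funext h'
  rwa [this] at h

/-- Single elementary refinement at `v` by a prefix-free exhaustive family. -/
lemma elemRefine_step (M : ↥(CoreV D) → ℕ) (v : ↥(CoreV D)) (P : Finset (FinWalk D))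
    (hF : FamAt v P) (hv : 0 < M v) :
    ElemRefine D M (fun w =>
      (M w - (if w = v then 1 else 0)) + (P.filter (fun p => endVert D p = w.1)).card) :=
  (elemRefine_iff _ _).mpr ⟨v, P, hv, hF.1, hF.2, fun _ => rfl⟩

lemma elemRefine_add {M N C : ↥(CoreV D) → ℕ} (h : ElemRefine D M N) :
    ElemRefine D (fun w => M w + C w) (fun w => N w + C w) := by
  obtain ⟨v, P, hv, h1, h2, h3⟩ := (elemRefine_iff _ _).mp h
  refine (elemRefine_iff _ _).mpr ⟨v, P, by omega, h1, h2, fun w => ?_⟩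
  have := h3 w
  rcases eq_or_ne w v with rfl | hne
  · rw [if_pos rfl] at this ⊢; omega
  · rw [if_neg hne] at this ⊢; omega

lemma refine_add {M N C : ↥(CoreV D) → ℕ} (h : Refine D M N) :
    Refine D (fun w => M w + C w) (fun w => N w + C w) :=
  Relation.ReflTransGen.lift (fun (X : ↥(CoreV D) → ℕ) (w : ↥(CoreV D)) => X w + C w) (fun _ _ hr => elemRefine_add hr) _ _ h

lemma elemRefine_add' {M N C : ↥(CoreV D) → ℕ} (h : ElemRefine D M N) :
    ElemRefine D (fun w => C w + M w) (fun w => C w + N w) := by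
  obtain ⟨v, P, hv, h1, h2, h3⟩ := (elemRefine_iff _ _).mp h
  refine (elemRefine_iff _ _).mpr ⟨v, P, by omega, h1, h2, fun w => ?_⟩
  have := h3 w
  rcases eq_or_ne w v with rfl | hne
  · rw [if_pos rfl] at this ⊢; omega
  · rw [if_neg hne] at this ⊢; omega

lemma refine_add' {M N C : ↥(CoreV D) → ℕ} (h : Refine D M N) :
    Refine D (fun w => C w + M w) (fun w => C w + N w) :=
  Relation.ReflTransGen.lift (fun (X : ↥(CoreV D) → ℕ) (w : ↥(CoreV D)) => C w + X w) (fun _ _ hr => elemRefine_add' hr) _ _ h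

lemma refine_add₂ {A A' B B' : ↥(CoreV D) → ℕ} (hA : Refine D A A') (hB : Refine D B B') :
    Refine D (fun w => A w + B w) (fun w => A' w + B' w) := by
  have s1 : Refine D (fun w => A w + B w) (fun w => A' w + B w) := refine_add hA
  have s2 : Refine D (fun w => A' w + B w) (fun w => A' w + B' w) := refine_add' hB
  exact s1.trans s2

lemma refine_sum {ι : Type*} (T : Finset ι) (f g : ι → ↥(CoreV D) → ℕ)
    (h : ∀ i ∈ T, Refine D (f i) (g i)) :
    Refine D (fun w => ∑ i ∈ T, f i w) (fun w => ∑ i ∈ T, g i w) := by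
  classical
  induction T using Finset.induction with
  | empty => simp only [Finset.sum_empty]; exact Relation.ReflTransGen.refl
  | insert a s hni ih =>
    have h1 : Refine D (f a) (g a) := h a (Finset.mem_insert_self a s)
    have h2 := ih (fun i hi => h i (Finset.mem_insert_of_mem hi))
    have base := refine_add₂ h1 h2
    have e1 : (fun w => ∑ i ∈ insert a s, f i w)
        = (fun w => f a w + ∑ i ∈ s, f i w) := funext fun w => Finset.sum_insert hni
    have e2 : (fun w => ∑ i ∈ insert a s, g i w)
        = (fun w => g a w + ∑ i ∈ s, g i w) := funext fun w => Finset.sum_insert hni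
    rw [e1, e2]
    exact base

end S10
namespace S10
open Classical
variable {D : Digraph'} [Fintype D.E] [Fintype D.V]

/-- The standard depth-`n` refinement of the multiset `M`. -/
noncomputable def SM (D : Digraph') [Fintype D.E] [Fintype D.V]
    (M : ↥(CoreV D) → ℕ) (n : ℕ) : ↥(CoreV D) → ℕ :=
  fun w => ∑ v : ↥(CoreV D), M v * cntW D n v.1 w.1

lemma SM_zero (M : ↥(CoreV D) → ℕ) : SM D M 0 = M := by
  funext w
  unfold SM
  rw [Finset.sum_congr rfl (fun v _ => by rw [cntW_zero' v w])]
  simp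

lemma SM_comp (M : ↥(CoreV D) → ℕ) (m k : ℕ) : SM D (SM D M m) k = SM D M (m+k) := by
  funext w
  unfold SM
  simp only [Finset.sum_mul]
  rw [Finset.sum_comm]
  refine Finset.sum_congr rfl fun v _ => ?_
  rw [cnt_comp m k v w.1, Finset.mul_sum]
  exact Finset.sum_congr rfl fun u _ => mul_assoc _ _ _

lemma SM_famAt (v : ↥(CoreV D)) (n : ℕ) : FamAt v (Wset D n v.1) := famAt_Wset v n

lemma elemRefine_stepW (M : ↥(CoreV D) → ℕ) (v : ↥(CoreV D)) (n : ℕ) (hv : 0 < M v) :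
    ElemRefine D M (fun w =>
      (M w - (if w = v then 1 else 0)) + cntW D n v.1 w.1) :=
  (elemRefine_iff _ _).mpr ⟨v, Wset D n v.1, hv, (SM_famAt v n).1, (SM_famAt v n).2,
    fun _ => rfl⟩

lemma refine_SM_aux (n : ℕ) (N : ℕ) : ∀ (A B : ↥(CoreV D) → ℕ), (∑ v, A v) = N →
    Refine D (fun w => A w + B w) (fun w => SM D A n w + B w) := by
  induction N with
  | zero =>
    intro A B hA
    have hA0 : ∀ v, A v = 0 := by
      intro v
      have := Finset.sum_eq_zero_iff.mp hA
      exact this v (Finset.mem_univ v)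
    have hS : ∀ w, SM D A n w = A w := by
      intro w
      unfold SM
      rw [Finset.sum_congr rfl (fun u _ => by rw [hA0 u, Nat.zero_mul]), hA0 w]
      simp
    refine refine_congr Relation.ReflTransGen.refl (fun w => by rw [hS w])
  | succ m ih =>
    intro A B hA
    have hex : ∃ v, 0 < A v := by
      by_contra hc
      push_neg at hc
      have : ∀ v ∈ Finset.univ, A v = 0 := fun v _ => Nat.le_zero.mp (hc v)
      rw [Finset.sum_congr rfl this] at hA
      simp at hA
    obtain ⟨v, hv⟩ := hex
    set A' : ↥(CoreV D) → ℕ := fun w => A w - (if w = v then 1 else 0) with hA'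
    have hAs : ∀ w, A w = A' w + (if w = v then 1 else 0) := by
      intro w
      simp only [hA']
      split_ifs with h
      · subst h; omega
      · omega
    have hmass : (∑ u, A' u) = m := by
      have : (∑ u, A u) = (∑ u, A' u) + ∑ u, (if u = v then 1 else 0) := by
        rw [← Finset.sum_add_distrib]
        exact Finset.sum_congr rfl fun u _ => hAs u
      rw [Finset.sum_ite_eq' Finset.univ v (fun _ => 1)] at this
      simp only [Finset.mem_univ, if_pos] at this
      omega
    -- one elementary step at v with family Wset n v
    have step : ElemRefine D (fun w => A w + B w)
        (fun w => A' w + (B w + cntW D n v.1 w.1)) := by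
      have h0 : 0 < A v + B v := by omega
      have hstep := elemRefine_stepW (fun w => A w + B w) v n h0
      have heq : (fun w => (A w + B w - (if w = v then 1 else 0)) + cntW D n v.1 w.1)
          = (fun w => A' w + (B w + cntW D n v.1 w.1)) := by
        funext w
        simp only [hA']
        split_ifs with h
        · subst h; omega
        · omega
      rwa [heq] at hstep
    have tail := ih A' (fun w => B w + cntW D n v.1 w.1) hmass
    have hfin : ∀ w, SM D A' n w + (B w + cntW D n v.1 w.1) = SM D A n w + B w := by
      intro w
      have hSM : SM D A n w = SM D A' n w + cntW D n v.1 w.1 := by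
        unfold SM
        rw [Finset.sum_congr rfl (fun u _ => by rw [hAs u, Nat.add_mul, ite_mul,
          Nat.one_mul, Nat.zero_mul]), Finset.sum_add_distrib,
          Finset.sum_ite_eq' Finset.univ v (fun u => cntW D n u.1 w.1)]
        simp
      omega
    exact Relation.ReflTransGen.head step (refine_congr tail hfin)

lemma refine_SM (M : ↥(CoreV D) → ℕ) (n : ℕ) : Refine D M (SM D M n) := by
  have := refine_SM_aux (D := D) n (∑ v, M v) M (fun _ => 0) rfl
  have e1 : (fun w => M w + (fun _ => 0) w) = M := funext fun w => by simp
  have e2 : (fun w => SM D M n w + (fun _ => 0) w) = SM D M n := funext fun w => by simp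
  rwa [e1, e2] at this

lemma refine_SM_le (M : ↥(CoreV D) → ℕ) {m n : ℕ} (h : m ≤ n) :
    Refine D (SM D M m) (SM D M n) := by
  have := refine_SM (SM D M m) (n - m)
  rwa [SM_comp, Nat.add_sub_cancel' h] at this

lemma refine_cnt (u : ↥(CoreV D)) {m n : ℕ} (h : m ≤ n) :
    Refine D (fun w => cntW D m u.1 w.1) (fun w => cntW D n u.1 w.1) := by
  have hd : ∀ k, (fun w : ↥(CoreV D) => cntW D k u.1 w.1)
      = SM D (fun w => if w = u then 1 else 0) k := by
    intro k
    funext w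
    unfold SM
    rw [Finset.sum_congr rfl (fun x _ => by rw [ite_mul, Nat.one_mul, Nat.zero_mul]),
      Finset.sum_ite_eq' Finset.univ u (fun x => cntW D k x.1 w.1)]
    simp
  rw [hd m, hd n]
  exact refine_SM_le _ h

end S10
namespace S10
open Classical
variable {D : Digraph'} [Fintype D.E] [Fintype D.V]

lemma refine_congr_left {M M' N : ↥(CoreV D) → ℕ} (h : Refine D M N) (h' : ∀ w, M w = M' w) :
    Refine D M' N := by
  have : M = M' := funext h'
  rwa [this] at h

lemma strip {M b : ↥(CoreV D) → ℕ} (hE : ElemRefine D M b) (m : ℕ) :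
    ∃ n, Refine D (SM D b m) (SM D M n) := by
  obtain ⟨v, P, hv, h1, h2, h3⟩ := (elemRefine_iff _ _).mp hE
  have hF : FamAt v P := ⟨h1, h2⟩
  set L := P.sup (fun p => p.ed.length) with hL
  have hlen : ∀ p ∈ P, p.ed.length ≤ L := fun p hp => Finset.le_sup (f := fun p : FinWalk D => p.ed.length) hp
  refine ⟨m + L, ?_⟩
  have hend : ∀ p ∈ P, endVert D p ∈ CoreV D := fun p hp =>
    endVert_core (by rw [(h1 p hp).1]; exact v.2) (h1 p hp).2
  set g : FinWalk D → ↥(CoreV D) :=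
    fun p => if h : endVert D p ∈ CoreV D then ⟨_, h⟩ else v with hg
  have hg1 : ∀ p ∈ P, (g p).1 = endVert D p := by
    intro p hp
    simp only [hg, dif_pos (hend p hp)]
  set A' : ↥(CoreV D) → ℕ := fun w => M w - (if w = v then 1 else 0) with hA'
  -- decomposition of SM b m
  have e_b : ∀ w, SM D b m w
      = SM D A' m w + ∑ p ∈ P, cntW D m (endVert D p) w.1 := by
    intro w
    have hsplit : ∀ u, b u * cntW D m u.1 w.1
        = A' u * cntW D m u.1 w.1
          + (P.filter (fun p => endVert D p = u.1)).card * cntW D m u.1 w.1 := by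
      intro u
      rw [h3 u, Nat.add_mul]
    unfold SM
    rw [Finset.sum_congr rfl (fun u _ => hsplit u), Finset.sum_add_distrib]
    congr 1
    -- fiberwise sum
    rw [← Finset.sum_fiberwise_of_maps_to (g := g)
      (fun p _ => Finset.mem_univ (g p)) (fun p => cntW D m (endVert D p) w.1)]
    refine Finset.sum_congr rfl fun u _ => ?_
    have hfe : P.filter (fun p => g p = u) = P.filter (fun p => endVert D p = u.1) := by
      refine Finset.filter_congr fun p hp => ?_
      rw [← hg1 p hp]
      simp [Subtype.ext_iff]
    rw [hfe]
    rw [Finset.sum_congr rfl (fun p hp => by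
      rw [(Finset.mem_filter.mp hp).2] : ∀ p ∈ P.filter (fun p => endVert D p = u.1),
        cntW D m (endVert D p) w.1 = cntW D m u.1 w.1)]
    rw [Finset.sum_const, smul_eq_mul]
  -- decomposition of SM M (m+L)
  have e_M : ∀ w, SM D M (m+L) w
      = SM D A' (m+L) w + ∑ p ∈ P, cntW D (m + L - p.ed.length) (endVert D p) w.1 := by
    intro w
    have h4 : cntW D (m+L) v.1 w.1
        = ∑ p ∈ P, cntW D (m + L - p.ed.length) (endVert D p) w.1 :=
      cnt_split v hF (fun p hp => le_trans (hlen p hp) (by omega)) w.1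
    have hMu : ∀ u, M u = A' u + (if u = v then 1 else 0) := by
      intro u
      simp only [hA']
      split_ifs with h
      · subst h; omega
      · omega
    unfold SM
    rw [Finset.sum_congr rfl (fun u _ => by rw [hMu u, Nat.add_mul, ite_mul,
      Nat.one_mul, Nat.zero_mul]), Finset.sum_add_distrib,
      Finset.sum_ite_eq' Finset.univ v (fun u => cntW D (m+L) u.1 w.1)]
    simp only [Finset.mem_univ, if_pos]
    rw [h4]
  -- the refinement
  have part1 : Refine D (SM D A' m) (SM D A' (m+L)) := refine_SM_le A' (by omega)
  have part2 : Refine D (fun w => ∑ p ∈ P, cntW D m (endVert D p) w.1)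
      (fun w => ∑ p ∈ P, cntW D (m + L - p.ed.length) (endVert D p) w.1) := by
    refine refine_sum P _ _ fun p hp => ?_
    have hc := refine_cnt (g p) (m := m) (n := m + L - p.ed.length)
      (by have := hlen p hp; omega)
    rw [hg1 p hp] at hc
    exact hc
  have total := refine_add₂ part1 part2
  refine refine_congr (refine_congr_left total ?_) ?_
  · exact fun w => (e_b w).symm
  · exact fun w => (e_M w).symm

end S10

namespace S10
open Classical
variable {D : Digraph'} [Fintype D.E] [Fintype D.V]

lemma refine_to_SM {M a : ↥(CoreV D) → ℕ} (h : Refine D M a) :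
    ∀ m, ∃ n, Refine D (SM D a m) (SM D M n) := by
  induction h using Relation.ReflTransGen.head_induction_on with
  | refl => exact fun m => ⟨m, Relation.ReflTransGen.refl⟩
  | head hstep _ ih =>
    intro m
    obtain ⟨n₁, hr₁⟩ := ih m
    obtain ⟨n₂, hr₂⟩ := strip hstep n₁
    exact ⟨n₂, hr₁.trans hr₂⟩

end S10

/-- "Having a common refinement" is an equivalence relation on multisets over the
core vertices of an UDAF digraph; in particular it is transitive. -/
theorem stmt10 (D : Digraph') [Fintype D.V] [Fintype D.E] (hU : IsUDAF D) :
    Equivalence (fun M₁ M₂ : ↥(CoreV D) → ℕ => ∃ N, Refine D M₁ N ∧ Refine D M₂ N) := by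
  constructor
  · intro M
    exact ⟨M, Relation.ReflTransGen.refl, Relation.ReflTransGen.refl⟩
  · rintro M₁ M₂ ⟨N, h1, h2⟩
    exact ⟨N, h2, h1⟩
  · rintro M₁ M₂ M₃ ⟨N, h1, h2⟩ ⟨N', h3, h4⟩
    obtain ⟨n, hn⟩ := S10.refine_to_SM h2 0
    obtain ⟨n', hn'⟩ := S10.refine_to_SM h3 0
    rw [S10.SM_zero] at hn hn'
    refine ⟨S10.SM D M₂ (max n n'), ?_, ?_⟩
    · exact h1.trans (hn.trans (S10.refine_SM_le M₂ (le_max_left _ _)))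
    · exact h4.trans (hn'.trans (S10.refine_SM_le M₂ (le_max_right _ _)))
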